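/- For a cyclic hexagon with vertices 1,…,6 ordered counterclockwise on a circle, and any α > 0: 1/r₁₃^α + 1/r₁₅^α + 1/r₂₄^α + 1/r₂₆^α + 1/r₃₅^α + 1/r₄₆^α < 1/r₁₂^α + 1/r₁₄^α + 1/r₁₆^α + 1/r₂₃^α + 1/r₂₅^α + 1/r₃₄^α + 1/r₃₆^α + 1/r₄₅^α + 1/r₅₆^α. -/
import Mathlib

lemma stmt9_sin_mono (a b : ℝ) (h0 : 0 < a) (hab : a ≤ b) (hb : b ≤ Real.pi / 2) :
    Real.sin a ≤ Real.sin b := by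
  have hπ := Real.pi_pos
  exact Real.strictMonoOn_sin.monotoneOn ⟨by linarith, by linarith⟩ ⟨by linarith, by linarith⟩ hab

lemma stmt9_small_bnd (α x s : ℝ) (hα : 0 < α) (hx : 0 < x) (hxs : x ≤ s)
    (hs : s ≤ Real.pi / 2) :
    1 / (2 * Real.sin s) ^ α ≤ 1 / (2 * Real.sin x) ^ α := by
  have hπ := Real.pi_pos
  have hsx : Real.sin x ≤ Real.sin s := stmt9_sin_mono x s hx hxs hs
  have hpx : 0 < Real.sin x := Real.sin_pos_of_pos_of_lt_pi hx (by linarith)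
  have h2x : (0:ℝ) < 2 * Real.sin x := by linarith
  have hle : (2 * Real.sin x) ^ α ≤ (2 * Real.sin s) ^ α :=
    Real.rpow_le_rpow (le_of_lt h2x) (by linarith) hα.le
  exact one_div_le_one_div_of_le (Real.rpow_pos_of_pos h2x α) hle

lemma stmt9_big_bnd (α t s : ℝ) (hα : 0 < α) (ht : 0 < t) (hts : t ≤ Real.pi - s)
    (hs : Real.pi - s ≤ Real.pi / 2) :
    1 / (2 * Real.sin s) ^ α ≤ 1 / (2 * Real.sin t) ^ α := by
  have h := stmt9_small_bnd α t (Real.pi - s) hα ht hts hs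
  rwa [Real.sin_pi_sub] at h

lemma stmt9_big_bnd' (α t s : ℝ) (hα : 0 < α) (ht : 0 < Real.pi - t)
    (hts : Real.pi - t ≤ Real.pi - s) (hs : Real.pi - s ≤ Real.pi / 2) :
    1 / (2 * Real.sin s) ^ α ≤ 1 / (2 * Real.sin t) ^ α := by
  have h := stmt9_small_bnd α (Real.pi - t) (Real.pi - s) hα ht hts hs
  rwa [Real.sin_pi_sub, Real.sin_pi_sub] at h

lemma stmt9_fpos (α t : ℝ) (h1 : 0 < t) (h2 : t < Real.pi) :
    0 < 1 / (2 * Real.sin t) ^ α := by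
  have hs := Real.sin_pos_of_pos_of_lt_pi h1 h2
  have h2t : (0:ℝ) < 2 * Real.sin t := by linarith
  exact one_div_pos.mpr (Real.rpow_pos_of_pos h2t α)

set_option maxHeartbeats 2000000 in
lemma stmt9_aux (α x₁ x₂ x₃ x₄ x₅ x₆ : ℝ) (hα : 0 < α)
    (h₁ : 0 < x₁) (h₂ : 0 < x₂) (h₃ : 0 < x₃) (h₄ : 0 < x₄) (h₅ : 0 < x₅) (h₆ : 0 < x₆)
    (hsum : x₁ + x₂ + x₃ + x₄ + x₅ + x₆ = Real.pi) :
    1 / (2 * Real.sin (x₁ + x₂)) ^ α + 1 / (2 * Real.sin (x₁ + x₂ + x₃ + x₄)) ^ α +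
      1 / (2 * Real.sin (x₂ + x₃)) ^ α + 1 / (2 * Real.sin (x₂ + x₃ + x₄ + x₅)) ^ α +
      1 / (2 * Real.sin (x₃ + x₄)) ^ α + 1 / (2 * Real.sin (x₄ + x₅)) ^ α <
    1 / (2 * Real.sin x₁) ^ α + 1 / (2 * Real.sin (x₁ + x₂ + x₃)) ^ α +
      1 / (2 * Real.sin (x₁ + x₂ + x₃ + x₄ + x₅)) ^ α + 1 / (2 * Real.sin x₂) ^ α +
      1 / (2 * Real.sin (x₂ + x₃ + x₄)) ^ α + 1 / (2 * Real.sin x₃) ^ α +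
      1 / (2 * Real.sin (x₃ + x₄ + x₅)) ^ α + 1 / (2 * Real.sin x₄) ^ α +
      1 / (2 * Real.sin x₅) ^ α := by
  have hπ := Real.pi_pos
  rw [show x₁ + x₂ + x₃ + x₄ + x₅ = Real.pi - x₆ by linarith,
      show x₁ + x₂ + x₃ + x₄ = Real.pi - (x₅ + x₆) by linarith,
      show x₂ + x₃ + x₄ + x₅ = Real.pi - (x₆ + x₁) by linarith,
      Real.sin_pi_sub, Real.sin_pi_sub, Real.sin_pi_sub]
  -- positivity of all RHS terms
  have px1 := stmt9_fpos α x₁ h₁ (by linarith)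
  have px2 := stmt9_fpos α x₂ h₂ (by linarith)
  have px3 := stmt9_fpos α x₃ h₃ (by linarith)
  have px4 := stmt9_fpos α x₄ h₄ (by linarith)
  have px5 := stmt9_fpos α x₅ h₅ (by linarith)
  have px6 := stmt9_fpos α x₆ h₆ (by linarith)
  have pt1 := stmt9_fpos α (x₁ + x₂ + x₃) (by linarith) (by linarith)
  have pt2 := stmt9_fpos α (x₂ + x₃ + x₄) (by linarith) (by linarith)
  have pt3 := stmt9_fpos α (x₃ + x₄ + x₅) (by linarith) (by linarith)
  -- among s₁ = x₁+x₂, s₃ = x₃+x₄, s₅ = x₅+x₆ (sum = π), at most one exceeds π/2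
  have Hodd : (x₁ + x₂ ≤ Real.pi/2 ∧ x₃ + x₄ ≤ Real.pi/2 ∧ x₅ + x₆ ≤ Real.pi/2) ∨
      (Real.pi/2 < x₁ + x₂ ∧ x₃ + x₄ ≤ Real.pi/2 ∧ x₅ + x₆ ≤ Real.pi/2) ∨
      (x₁ + x₂ ≤ Real.pi/2 ∧ Real.pi/2 < x₃ + x₄ ∧ x₅ + x₆ ≤ Real.pi/2) ∨
      (x₁ + x₂ ≤ Real.pi/2 ∧ x₃ + x₄ ≤ Real.pi/2 ∧ Real.pi/2 < x₅ + x₆) := by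
    rcases le_or_gt (x₁ + x₂) (Real.pi/2) with a | a
    · rcases le_or_gt (x₃ + x₄) (Real.pi/2) with b | b
      · rcases le_or_gt (x₅ + x₆) (Real.pi/2) with c | c
        · exact Or.inl ⟨a, b, c⟩
        · exact Or.inr (Or.inr (Or.inr ⟨a, b, c⟩))
      · exact Or.inr (Or.inr (Or.inl ⟨a, b, by linarith⟩))
    · exact Or.inr (Or.inl ⟨a, by linarith, by linarith⟩)
  have Heven : (x₂ + x₃ ≤ Real.pi/2 ∧ x₄ + x₅ ≤ Real.pi/2 ∧ x₆ + x₁ ≤ Real.pi/2) ∨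
      (Real.pi/2 < x₂ + x₃ ∧ x₄ + x₅ ≤ Real.pi/2 ∧ x₆ + x₁ ≤ Real.pi/2) ∨
      (x₂ + x₃ ≤ Real.pi/2 ∧ Real.pi/2 < x₄ + x₅ ∧ x₆ + x₁ ≤ Real.pi/2) ∨
      (x₂ + x₃ ≤ Real.pi/2 ∧ x₄ + x₅ ≤ Real.pi/2 ∧ Real.pi/2 < x₆ + x₁) := by
    rcases le_or_gt (x₂ + x₃) (Real.pi/2) with a | a
    · rcases le_or_gt (x₄ + x₅) (Real.pi/2) with b | b
      · rcases le_or_gt (x₆ + x₁) (Real.pi/2) with c | c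
        · exact Or.inl ⟨a, b, c⟩
        · exact Or.inr (Or.inr (Or.inr ⟨a, b, c⟩))
      · exact Or.inr (Or.inr (Or.inl ⟨a, b, by linarith⟩))
    · exact Or.inr (Or.inl ⟨a, by linarith, by linarith⟩)
  rcases Hodd with ⟨o1, o3, o5⟩ | ⟨o1, o3, o5⟩ | ⟨o1, o3, o5⟩ | ⟨o1, o3, o5⟩
  · -- all odd small
    have b1 := stmt9_small_bnd α x₁ (x₁ + x₂) hα h₁ (by linarith) o1
    have b3 := stmt9_small_bnd α x₃ (x₃ + x₄) hα h₃ (by linarith) o3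
    have b5 := stmt9_small_bnd α x₅ (x₅ + x₆) hα h₅ (by linarith) o5
    rcases Heven with ⟨e2, e4, e6⟩ | ⟨e2, e4, e6⟩ | ⟨e2, e4, e6⟩ | ⟨e2, e4, e6⟩
    · have b2 := stmt9_small_bnd α x₂ (x₂ + x₃) hα h₂ (by linarith) e2
      have b4 := stmt9_small_bnd α x₄ (x₄ + x₅) hα h₄ (by linarith) e4
      have b6 := stmt9_small_bnd α x₆ (x₆ + x₁) hα h₆ (by linarith) e6
      linarith
    · -- s₂ big ↦ T₁ (complement: π - T₁ = x₄+x₅+x₆)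
      have b2 := stmt9_big_bnd' α (x₁ + x₂ + x₃) (x₂ + x₃) hα (by linarith) (by linarith)
        (by linarith)
      have b4 := stmt9_small_bnd α x₄ (x₄ + x₅) hα h₄ (by linarith) e4
      have b6 := stmt9_small_bnd α x₆ (x₆ + x₁) hα h₆ (by linarith) e6
      linarith
    · -- s₄ big ↦ T₁ (direct: T₁ ≤ π - s₄)
      have b2 := stmt9_small_bnd α x₂ (x₂ + x₃) hα h₂ (by linarith) e2
      have b4 := stmt9_big_bnd α (x₁ + x₂ + x₃) (x₄ + x₅) hα (by linarith) (by linarith)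
        (by linarith)
      have b6 := stmt9_small_bnd α x₆ (x₆ + x₁) hα h₆ (by linarith) e6
      linarith
    · -- s₆ big ↦ T₂ (direct: T₂ ≤ π - s₆)
      have b2 := stmt9_small_bnd α x₂ (x₂ + x₃) hα h₂ (by linarith) e2
      have b4 := stmt9_small_bnd α x₄ (x₄ + x₅) hα h₄ (by linarith) e4
      have b6 := stmt9_big_bnd α (x₂ + x₃ + x₄) (x₆ + x₁) hα (by linarith) (by linarith)
        (by linarith)
      linarith
  · -- s₁ big ↦ T₃ (direct)
    have b1 := stmt9_big_bnd α (x₃ + x₄ + x₅) (x₁ + x₂) hα (by linarith) (by linarith)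
      (by linarith)
    have b3 := stmt9_small_bnd α x₃ (x₃ + x₄) hα h₃ (by linarith) o3
    have b5 := stmt9_small_bnd α x₅ (x₅ + x₆) hα h₅ (by linarith) o5
    rcases Heven with ⟨e2, e4, e6⟩ | ⟨e2, e4, e6⟩ | ⟨e2, e4, e6⟩ | ⟨e2, e4, e6⟩
    · have b2 := stmt9_small_bnd α x₂ (x₂ + x₃) hα h₂ (by linarith) e2
      have b4 := stmt9_small_bnd α x₄ (x₄ + x₅) hα h₄ (by linarith) e4
      have b6 := stmt9_small_bnd α x₆ (x₆ + x₁) hα h₆ (by linarith) e6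
      linarith
    · -- s₂ big ↦ T₁ (complement)
      have b2 := stmt9_big_bnd' α (x₁ + x₂ + x₃) (x₂ + x₃) hα (by linarith) (by linarith)
        (by linarith)
      have b4 := stmt9_small_bnd α x₄ (x₄ + x₅) hα h₄ (by linarith) e4
      have b6 := stmt9_small_bnd α x₆ (x₆ + x₁) hα h₆ (by linarith) e6
      linarith
    · -- s₄ big ↦ T₁ (direct)
      have b2 := stmt9_small_bnd α x₂ (x₂ + x₃) hα h₂ (by linarith) e2
      have b4 := stmt9_big_bnd α (x₁ + x₂ + x₃) (x₄ + x₅) hα (by linarith) (by linarith)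
        (by linarith)
      have b6 := stmt9_small_bnd α x₆ (x₆ + x₁) hα h₆ (by linarith) e6
      linarith
    · -- s₆ big ↦ T₂ (direct)
      have b2 := stmt9_small_bnd α x₂ (x₂ + x₃) hα h₂ (by linarith) e2
      have b4 := stmt9_small_bnd α x₄ (x₄ + x₅) hα h₄ (by linarith) e4
      have b6 := stmt9_big_bnd α (x₂ + x₃ + x₄) (x₆ + x₁) hα (by linarith) (by linarith)
        (by linarith)
      linarith
  · -- s₃ big ↦ T₂ (complement: π - T₂ = x₅+x₆+x₁)
    have b1 := stmt9_small_bnd α x₁ (x₁ + x₂) hα h₁ (by linarith) o1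
    have b3 := stmt9_big_bnd' α (x₂ + x₃ + x₄) (x₃ + x₄) hα (by linarith) (by linarith)
      (by linarith)
    have b5 := stmt9_small_bnd α x₅ (x₅ + x₆) hα h₅ (by linarith) o5
    rcases Heven with ⟨e2, e4, e6⟩ | ⟨e2, e4, e6⟩ | ⟨e2, e4, e6⟩ | ⟨e2, e4, e6⟩
    · have b2 := stmt9_small_bnd α x₂ (x₂ + x₃) hα h₂ (by linarith) e2
      have b4 := stmt9_small_bnd α x₄ (x₄ + x₅) hα h₄ (by linarith) e4
      have b6 := stmt9_small_bnd α x₆ (x₆ + x₁) hα h₆ (by linarith) e6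
      linarith
    · -- s₂ big ↦ T₁ (complement)
      have b2 := stmt9_big_bnd' α (x₁ + x₂ + x₃) (x₂ + x₃) hα (by linarith) (by linarith)
        (by linarith)
      have b4 := stmt9_small_bnd α x₄ (x₄ + x₅) hα h₄ (by linarith) e4
      have b6 := stmt9_small_bnd α x₆ (x₆ + x₁) hα h₆ (by linarith) e6
      linarith
    · -- s₄ big ↦ T₁ (direct)
      have b2 := stmt9_small_bnd α x₂ (x₂ + x₃) hα h₂ (by linarith) e2
      have b4 := stmt9_big_bnd α (x₁ + x₂ + x₃) (x₄ + x₅) hα (by linarith) (by linarith)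
        (by linarith)
      have b6 := stmt9_small_bnd α x₆ (x₆ + x₁) hα h₆ (by linarith) e6
      linarith
    · -- s₆ big ↦ T₃ (direct: T₃ ≤ π - s₆ = x₂+x₃+x₄+x₅)
      have b2 := stmt9_small_bnd α x₂ (x₂ + x₃) hα h₂ (by linarith) e2
      have b4 := stmt9_small_bnd α x₄ (x₄ + x₅) hα h₄ (by linarith) e4
      have b6 := stmt9_big_bnd α (x₃ + x₄ + x₅) (x₆ + x₁) hα (by linarith) (by linarith)
        (by linarith)
      linarith
  · -- s₅ big ↦ T₁ (direct: T₁ ≤ π - s₅ = x₁+x₂+x₃+x₄)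
    have b1 := stmt9_small_bnd α x₁ (x₁ + x₂) hα h₁ (by linarith) o1
    have b3 := stmt9_small_bnd α x₃ (x₃ + x₄) hα h₃ (by linarith) o3
    have b5 := stmt9_big_bnd α (x₁ + x₂ + x₃) (x₅ + x₆) hα (by linarith) (by linarith)
      (by linarith)
    rcases Heven with ⟨e2, e4, e6⟩ | ⟨e2, e4, e6⟩ | ⟨e2, e4, e6⟩ | ⟨e2, e4, e6⟩
    · have b2 := stmt9_small_bnd α x₂ (x₂ + x₃) hα h₂ (by linarith) e2
      have b4 := stmt9_small_bnd α x₄ (x₄ + x₅) hα h₄ (by linarith) e4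
      have b6 := stmt9_small_bnd α x₆ (x₆ + x₁) hα h₆ (by linarith) e6
      linarith
    · -- s₂ big ↦ T₂ (complement: π - T₂ = x₅+x₆+x₁ ≤ π - s₂ = x₄+x₅+x₆+x₁)
      have b2 := stmt9_big_bnd' α (x₂ + x₃ + x₄) (x₂ + x₃) hα (by linarith) (by linarith)
        (by linarith)
      have b4 := stmt9_small_bnd α x₄ (x₄ + x₅) hα h₄ (by linarith) e4
      have b6 := stmt9_small_bnd α x₆ (x₆ + x₁) hα h₆ (by linarith) e6
      linarith
    · -- s₄ big ↦ T₃ (complement: π - T₃ = x₆+x₁+x₂ ≤ π - s₄ = x₆+x₁+x₂+x₃)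
      have b2 := stmt9_small_bnd α x₂ (x₂ + x₃) hα h₂ (by linarith) e2
      have b4 := stmt9_big_bnd' α (x₃ + x₄ + x₅) (x₄ + x₅) hα (by linarith) (by linarith)
        (by linarith)
      have b6 := stmt9_small_bnd α x₆ (x₆ + x₁) hα h₆ (by linarith) e6
      linarith
    · -- s₆ big ↦ T₂ (direct)
      have b2 := stmt9_small_bnd α x₂ (x₂ + x₃) hα h₂ (by linarith) e2
      have b4 := stmt9_small_bnd α x₄ (x₄ + x₅) hα h₄ (by linarith) e4
      have b6 := stmt9_big_bnd α (x₂ + x₃ + x₄) (x₆ + x₁) hα (by linarith) (by linarith)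
        (by linarith)
      linarith

/-- For a cyclic hexagon with vertices at angles `0 ≤ θ₁ < … < θ₆ < 2π` on the unit
circle, chord lengths `r_{jk} = 2 sin((θ_k − θ_j)/2)`, and any `α > 0`:
`1/r₁₃^α + 1/r₁₅^α + 1/r₂₄^α + 1/r₂₆^α + 1/r₃₅^α + 1/r₄₆^α <`
`1/r₁₂^α + 1/r₁₄^α + 1/r₁₆^α + 1/r₂₃^α + 1/r₂₅^α + 1/r₃₄^α + 1/r₃₆^α + 1/r₄₅^α + 1/r₅₆^α`. -/
theorem stmt_9 (α θ₁ θ₂ θ₃ θ₄ θ₅ θ₆ : ℝ) (hα : 0 < α)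
    (h0 : 0 ≤ θ₁) (h12 : θ₁ < θ₂) (h23 : θ₂ < θ₃) (h34 : θ₃ < θ₄)
    (h45 : θ₄ < θ₅) (h56 : θ₅ < θ₆) (h6 : θ₆ < 2 * Real.pi)
    (r : ℝ → ℝ → ℝ) (hr : ∀ x y, r x y = 2 * Real.sin ((y - x) / 2)) :
    1 / r θ₁ θ₃ ^ α + 1 / r θ₁ θ₅ ^ α + 1 / r θ₂ θ₄ ^ α + 1 / r θ₂ θ₆ ^ α +
      1 / r θ₃ θ₅ ^ α + 1 / r θ₄ θ₆ ^ α <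
    1 / r θ₁ θ₂ ^ α + 1 / r θ₁ θ₄ ^ α + 1 / r θ₁ θ₆ ^ α + 1 / r θ₂ θ₃ ^ α +
      1 / r θ₂ θ₅ ^ α + 1 / r θ₃ θ₄ ^ α + 1 / r θ₃ θ₆ ^ α + 1 / r θ₄ θ₅ ^ α +
      1 / r θ₅ θ₆ ^ α := by
  simp only [hr]
  have key := stmt9_aux α ((θ₂ - θ₁)/2) ((θ₃ - θ₂)/2) ((θ₄ - θ₃)/2) ((θ₅ - θ₄)/2)
    ((θ₆ - θ₅)/2) (Real.pi - (θ₆ - θ₁)/2) hα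
    (by linarith) (by linarith) (by linarith) (by linarith) (by linarith)
    (by linarith) (by ring)
  rw [show (θ₂ - θ₁)/2 + (θ₃ - θ₂)/2 + (θ₄ - θ₃)/2 + (θ₅ - θ₄)/2 + (θ₆ - θ₅)/2
        = (θ₆ - θ₁)/2 by ring,
      show (θ₂ - θ₁)/2 + (θ₃ - θ₂)/2 + (θ₄ - θ₃)/2 + (θ₅ - θ₄)/2 = (θ₅ - θ₁)/2 by ring,
      show (θ₃ - θ₂)/2 + (θ₄ - θ₃)/2 + (θ₅ - θ₄)/2 + (θ₆ - θ₅)/2 = (θ₆ - θ₂)/2 by ring,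
      show (θ₂ - θ₁)/2 + (θ₃ - θ₂)/2 + (θ₄ - θ₃)/2 = (θ₄ - θ₁)/2 by ring,
      show (θ₃ - θ₂)/2 + (θ₄ - θ₃)/2 + (θ₅ - θ₄)/2 = (θ₅ - θ₂)/2 by ring,
      show (θ₄ - θ₃)/2 + (θ₅ - θ₄)/2 + (θ₆ - θ₅)/2 = (θ₆ - θ₃)/2 by ring,
      show (θ₂ - θ₁)/2 + (θ₃ - θ₂)/2 = (θ₃ - θ₁)/2 by ring,
      show (θ₃ - θ₂)/2 + (θ₄ - θ₃)/2 = (θ₄ - θ₂)/2 by ring,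
      show (θ₄ - θ₃)/2 + (θ₅ - θ₄)/2 = (θ₅ - θ₃)/2 by ring,
      show (θ₅ - θ₄)/2 + (θ₆ - θ₅)/2 = (θ₆ - θ₄)/2 by ring] at key
  exact key
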